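/- The function φ_λ(r) = j_{(n−2)/2}(iλr) (the power series ∑_{ℓ≥0} Γ(n/2)/(ℓ!Γ(n/2+ℓ)) (−λ²r²/4)^ℓ) satisfies the radial Bessel differential equation φ''(r) + ((n−1)/r) φ'(r) + λ² φ(r) = 0 for all r ≠ 0, with φ(0) = 1. -/

import Mathlib

open Real

private noncomputable def sg0 (a : ℕ → ℂ) (ℓ : ℕ) (x : ℝ) : ℂ := a ℓ * (x:ℂ) ^ (2 * ℓ)
private noncomputable def sg1 (a : ℕ → ℂ) (ℓ : ℕ) (x : ℝ) : ℂ :=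
  a ℓ * ((2 * ℓ : ℕ) : ℂ) * (x:ℂ) ^ (2 * ℓ - 1)
private noncomputable def sg2 (a : ℕ → ℂ) (ℓ : ℕ) (x : ℝ) : ℂ :=
  a ℓ * ((2 * ℓ : ℕ) : ℂ) * ((2 * ℓ - 1 : ℕ) : ℂ) * (x:ℂ) ^ (2 * ℓ - 1 - 1)
private noncomputable def sb (a : ℕ → ℂ) (R : ℝ) (ℓ : ℕ) : ℝ :=
  4 * 4 ^ ℓ * ‖a ℓ‖ * (max R 1) ^ (2 * ℓ)

private lemma sg0_deriv (a : ℕ → ℂ) (ℓ : ℕ) (y : ℝ) :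
    HasDerivAt (sg0 a ℓ) (sg1 a ℓ y) y := by
  have h := ((hasDerivAt_pow (2 * ℓ) ((y : ℝ) : ℂ)).const_mul (a ℓ)).comp_ofReal
  have e : sg1 a ℓ y = a ℓ * (((2 * ℓ : ℕ) : ℂ) * ((y:ℝ):ℂ) ^ (2 * ℓ - 1)) := by
    rw [sg1]; ring
  rw [e]
  exact h

private lemma sg1_deriv (a : ℕ → ℂ) (ℓ : ℕ) (y : ℝ) :
    HasDerivAt (sg1 a ℓ) (sg2 a ℓ y) y := by
  have h := ((hasDerivAt_pow (2 * ℓ - 1) ((y : ℝ) : ℂ)).const_mul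
    (a ℓ * ((2 * ℓ : ℕ) : ℂ))).comp_ofReal
  have e : sg2 a ℓ y = a ℓ * ((2 * ℓ : ℕ) : ℂ) *
      (((2 * ℓ - 1 : ℕ) : ℂ) * ((y:ℝ):ℂ) ^ (2 * ℓ - 1 - 1)) := by
    rw [sg2]; ring
  rw [e]
  exact h

private lemma stmt4_pow4 (ℓ : ℕ) : ((2 * ℓ) * (2 * ℓ - 1) : ℕ) ≤ 4 * 4 ^ ℓ := by
  have h2 : ℓ ≤ 2 ^ ℓ := (Nat.lt_two_pow_self (n := ℓ)).le
  have h4 : (4:ℕ) ^ ℓ = 2 ^ ℓ * 2 ^ ℓ := by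
    rw [show (4:ℕ) = 2 * 2 by norm_num, mul_pow]
  have h : (2 * ℓ) * (2 * ℓ - 1) ≤ (2 * ℓ) * (2 * ℓ) :=
    Nat.mul_le_mul_left _ (Nat.sub_le _ _)
  refine h.trans ?_
  rw [h4]
  nlinarith

private lemma stmt4_pow4' (ℓ : ℕ) : (2 * ℓ : ℕ) ≤ 4 * 4 ^ ℓ := by
  have h2 : ℓ ≤ 2 ^ ℓ := (Nat.lt_two_pow_self (n := ℓ)).le
  have h24 : (2:ℕ) ^ ℓ ≤ 4 ^ ℓ := Nat.pow_le_pow_left (by norm_num) ℓ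
  calc 2 * ℓ ≤ 2 * 2 ^ ℓ := Nat.mul_le_mul_left _ h2
    _ ≤ 4 * 4 ^ ℓ := Nat.mul_le_mul (by norm_num) h24

private lemma stmt4_one_le (ℓ : ℕ) : (1:ℝ) ≤ 4 * 4 ^ ℓ := by
  have h : (1:ℝ) ≤ 4 ^ ℓ := one_le_pow₀ (by norm_num)
  linarith

private lemma sb_key (a : ℕ → ℂ) (R : ℝ) (ℓ k : ℕ) (m : ℝ) (y : ℝ) (hy : |y| ≤ R)
    (hm4 : m ≤ 4 * 4 ^ ℓ) (hk : k ≤ 2 * ℓ) :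
    ‖a ℓ‖ * m * |y| ^ k ≤ sb a R ℓ := by
  have hM1 : (1:ℝ) ≤ max R 1 := le_max_right _ _
  have hyM : |y| ≤ max R 1 := le_trans hy (le_max_left _ _)
  have hp1 : |y| ^ k ≤ (max R 1) ^ k := pow_le_pow_left₀ (abs_nonneg y) hyM k
  have hp2 : (max R 1) ^ k ≤ (max R 1) ^ (2 * ℓ) := pow_le_pow_right₀ hM1 hk
  have hp : |y| ^ k ≤ (max R 1) ^ (2 * ℓ) := hp1.trans hp2
  calc ‖a ℓ‖ * m * |y| ^ k ≤ ‖a ℓ‖ * (4 * 4 ^ ℓ) * (max R 1) ^ (2 * ℓ) := by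
        have hA : ‖a ℓ‖ * m ≤ ‖a ℓ‖ * (4 * 4 ^ ℓ) :=
          mul_le_mul_of_nonneg_left hm4 (norm_nonneg _)
        exact mul_le_mul hA hp (by positivity) (by positivity)
    _ = sb a R ℓ := by rw [sb]; ring

private lemma sb_bound0 (a : ℕ → ℂ) (R : ℝ) (ℓ : ℕ) (y : ℝ) (hy : |y| ≤ R) :
    ‖sg0 a ℓ y‖ ≤ sb a R ℓ := by
  have e : ‖sg0 a ℓ y‖ = ‖a ℓ‖ * 1 * |y| ^ (2 * ℓ) := by
    rw [sg0, norm_mul, norm_pow, Complex.norm_real, Real.norm_eq_abs, mul_one]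
  rw [e]
  exact sb_key a R ℓ (2 * ℓ) 1 y hy (stmt4_one_le ℓ) le_rfl

private lemma sb_bound1 (a : ℕ → ℂ) (R : ℝ) (ℓ : ℕ) (y : ℝ) (hy : |y| ≤ R) :
    ‖sg1 a ℓ y‖ ≤ sb a R ℓ := by
  have e : ‖sg1 a ℓ y‖ = ‖a ℓ‖ * ((2 * ℓ : ℕ) : ℝ) * |y| ^ (2 * ℓ - 1) := by
    rw [sg1, norm_mul, norm_mul, norm_pow, Complex.norm_real, Real.norm_eq_abs,
      Complex.norm_natCast]
  rw [e]
  exact sb_key a R ℓ (2 * ℓ - 1) _ y hy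
    (by exact_mod_cast stmt4_pow4' ℓ) (by omega)

private lemma sb_bound2 (a : ℕ → ℂ) (R : ℝ) (ℓ : ℕ) (y : ℝ) (hy : |y| ≤ R) :
    ‖sg2 a ℓ y‖ ≤ sb a R ℓ := by
  have e : ‖sg2 a ℓ y‖ = ‖a ℓ‖ * (((2 * ℓ : ℕ) : ℝ) * ((2 * ℓ - 1 : ℕ) : ℝ))
      * |y| ^ (2 * ℓ - 1 - 1) := by
    rw [sg2, norm_mul, norm_mul, norm_mul, norm_pow, Complex.norm_real, Real.norm_eq_abs,
      Complex.norm_natCast, Complex.norm_natCast, mul_assoc (‖a ℓ‖)]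
  rw [e]
  refine sb_key a R ℓ (2 * ℓ - 1 - 1) _ y hy ?_ (by omega)
  rw [← Nat.cast_mul]
  exact_mod_cast stmt4_pow4 ℓ

private lemma sb_summable (a : ℕ → ℂ) (q : ℝ)
    (ha : ∀ ℓ : ℕ, ‖a ℓ‖ ≤ q ^ ℓ / Nat.factorial ℓ) (R : ℝ) : Summable (sb a R) := by
  have hle : ∀ ℓ : ℕ, sb a R ℓ ≤ 4 * ((4 * q * (max R 1) ^ 2) ^ ℓ / Nat.factorial ℓ) := by
    intro ℓ
    have h : sb a R ℓ ≤ 4 * 4 ^ ℓ * (q ^ ℓ / Nat.factorial ℓ) * (max R 1) ^ (2 * ℓ) := by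
      rw [sb]
      gcongr
      exact ha ℓ
    refine h.trans (le_of_eq ?_)
    have hf : (Nat.factorial ℓ : ℝ) ≠ 0 := by exact_mod_cast (Nat.factorial_pos ℓ).ne'
    rw [mul_pow, mul_pow, pow_mul]
    field_simp
  exact Summable.of_nonneg_of_le (fun ℓ => by rw [sb]; positivity) hle
    ((Real.summable_pow_div_factorial _).mul_left 4)

private lemma stmt4_aux_deriv (gp gn : ℕ → ℝ → ℂ) (b : ℝ → ℕ → ℝ)
    (hderiv : ∀ ℓ (y : ℝ), HasDerivAt (gp ℓ) (gn ℓ y) y)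
    (hsum : ∀ R : ℝ, Summable (b R))
    (hbp : ∀ (R : ℝ) (ℓ : ℕ) (y : ℝ), |y| ≤ R → ‖gp ℓ y‖ ≤ b R ℓ)
    (hbn : ∀ (R : ℝ) (ℓ : ℕ) (y : ℝ), |y| ≤ R → ‖gn ℓ y‖ ≤ b R ℓ) :
    ∀ x : ℝ, HasDerivAt (fun y => ∑' ℓ, gp ℓ y) (∑' ℓ, gn ℓ x) x := by
  intro x
  have hR0 : (0:ℝ) < |x| + 1 := by positivity
  have hball : ∀ (ℓ : ℕ) (y : ℝ), y ∈ Metric.ball (0:ℝ) (|x|+1) →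
      ‖gn ℓ y‖ ≤ b (|x|+1) ℓ := by
    intro ℓ y hy
    refine hbn _ ℓ y ?_
    have h := Metric.mem_ball.mp hy
    rw [Real.dist_0_eq_abs] at h
    exact h.le
  have h0mem : (0:ℝ) ∈ Metric.ball (0:ℝ) (|x|+1) := by simpa [Metric.mem_ball] using hR0
  have hsum0 : Summable (fun ℓ => gp ℓ 0) :=
    Summable.of_norm_bounded (hsum _) (fun ℓ => hbp _ ℓ 0 (by simp; positivity))
  have hxmem : x ∈ Metric.ball (0:ℝ) (|x|+1) := by
    rw [Metric.mem_ball, Real.dist_0_eq_abs]; linarith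
  exact hasDerivAt_tsum_of_isPreconnected (hsum (|x|+1)) Metric.isOpen_ball
    (convex_ball (0:ℝ) (|x|+1)).isPreconnected (fun ℓ y _ => hderiv ℓ y) hball h0mem hsum0 hxmem

/-- The normalized modified Bessel series `φ_λ(r) = j_{(n−2)/2}(iλr)` satisfies the radial
Bessel equation `φ'' + ((n−1)/r) φ' + λ² φ = 0` for `r ≠ 0`, with `φ(0) = 1`. -/
theorem stmt_4 (n : ℕ) (hn : 1 ≤ n) (lam : ℂ) (φ : ℝ → ℂ)
    (hφ : ∀ r : ℝ, φ r = ∑' ℓ : ℕ,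
      ((Real.Gamma (n / 2) / (Nat.factorial ℓ * Real.Gamma (n / 2 + ℓ)) : ℝ) : ℂ) *
        (-(lam ^ 2 * r ^ 2) / 4) ^ ℓ) :
    (∀ r : ℝ, r ≠ 0 →
      deriv (deriv φ) r + ((n : ℂ) - 1) / (r : ℂ) * deriv φ r + lam ^ 2 * φ r = 0) ∧
    φ 0 = 1 := by
  have hn1 : (1:ℝ) ≤ (n:ℝ) := by exact_mod_cast hn
  have hn2 : (0:ℝ) < (n:ℝ) / 2 := by linarith
  obtain ⟨c, hcdef⟩ : ∃ c : ℕ → ℝ, ∀ ℓ : ℕ,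
      c ℓ = Real.Gamma (n / 2) / (Nat.factorial ℓ * Real.Gamma (n / 2 + ℓ)) :=
    ⟨_, fun ℓ => rfl⟩
  obtain ⟨w, hwdef⟩ : ∃ w : ℂ, w = -lam ^ 2 / 4 := ⟨_, rfl⟩
  obtain ⟨a, hadef⟩ : ∃ a : ℕ → ℂ, ∀ ℓ : ℕ, a ℓ = (c ℓ : ℂ) * w ^ ℓ := ⟨_, fun ℓ => rfl⟩
  have hGpos : ∀ ℓ : ℕ, (0:ℝ) < Real.Gamma ((n:ℝ) / 2 + ℓ) := fun ℓ =>
    Real.Gamma_pos_of_pos (by positivity)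
  have hc0 : c 0 = 1 := by
    rw [hcdef 0]
    simp only [Nat.factorial_zero, Nat.cast_zero, Nat.cast_one, one_mul, add_zero]
    exact div_self (Real.Gamma_pos_of_pos hn2).ne'
  -- rewrite φ
  have h1 : ∀ r : ℝ, φ r = ∑' ℓ : ℕ, sg0 a ℓ r := by
    intro r
    rw [hφ r]
    refine tsum_congr fun ℓ => ?_
    rw [sg0, hadef ℓ, hcdef ℓ, hwdef]
    rw [show (-(lam ^ 2 * (r:ℂ) ^ 2) / 4) = (-lam ^ 2 / 4) * (r:ℂ) ^ 2 by ring,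
      mul_pow, pow_mul]
    ring
  -- recurrence for coefficients
  have hcrec : ∀ ℓ : ℕ, c (ℓ + 1) * ((2 * ℓ + 2) * (2 * ℓ + n)) = c ℓ * 4 := by
    intro ℓ
    have hx : ((n:ℝ) / 2 + ℓ) ≠ 0 := (by positivity : (0:ℝ) < (n:ℝ)/2 + ℓ).ne'
    have hG1 : Real.Gamma ((n:ℝ) / 2 + ((ℓ:ℝ) + 1)) =
        ((n:ℝ) / 2 + ℓ) * Real.Gamma ((n:ℝ) / 2 + ℓ) := by
      rw [show ((n:ℝ) / 2 + ((ℓ:ℝ) + 1)) = ((n:ℝ)/2 + ℓ) + 1 by ring]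
      exact Real.Gamma_add_one hx
    have hf : (Nat.factorial ℓ : ℝ) ≠ 0 := by exact_mod_cast (Nat.factorial_pos ℓ).ne'
    have hG : Real.Gamma ((n:ℝ) / 2 + ℓ) ≠ 0 := (hGpos ℓ).ne'
    rw [hcdef, hcdef]
    simp only [Nat.factorial_succ, Nat.cast_add, Nat.cast_one, Nat.cast_mul, hG1]
    field_simp
    ring
  have hrec : ∀ ℓ : ℕ, a (ℓ + 1) * ((2 * (ℓ:ℂ) + 2) * (2 * ℓ + n)) = -lam ^ 2 * a ℓ := by
    intro ℓ
    rw [hadef, hadef]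
    rw [show ((c (ℓ+1) : ℂ) * w ^ (ℓ+1)) * ((2 * (ℓ:ℂ) + 2) * (2 * (ℓ:ℂ) + n))
        = ((c (ℓ+1) * ((2 * ℓ + 2) * (2 * ℓ + n)) : ℝ) : ℂ) * w ^ (ℓ+1) by
      push_cast; ring]
    rw [hcrec ℓ]
    push_cast
    rw [hwdef]
    ring
  -- norm bound on coefficients
  have habound : ∀ ℓ : ℕ, ‖a ℓ‖ ≤ (‖lam‖ ^ 2 / 2) ^ ℓ / Nat.factorial ℓ := by
    intro ℓ
    induction ℓ with
    | zero =>
      rw [hadef 0, hc0]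
      simp
    | succ ℓ ih =>
      have e1 : ‖2 * (ℓ:ℂ) + 2‖ = 2 * (ℓ:ℝ) + 2 := by
        rw [show (2 * (ℓ:ℂ) + 2) = ((2 * (ℓ:ℝ) + 2 : ℝ) : ℂ) by push_cast; ring,
          Complex.norm_real, Real.norm_eq_abs, abs_of_nonneg (by positivity)]
      have e2 : ‖2 * (ℓ:ℂ) + (n:ℂ)‖ = 2 * (ℓ:ℝ) + n := by
        rw [show (2 * (ℓ:ℂ) + (n:ℂ)) = ((2 * (ℓ:ℝ) + n : ℝ) : ℂ) by push_cast; ring,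
          Complex.norm_real, Real.norm_eq_abs, abs_of_nonneg (by positivity)]
      have h : ‖a (ℓ+1)‖ * (2 * (ℓ:ℝ) + 2) * (2 * (ℓ:ℝ) + n) = ‖lam‖ ^ 2 * ‖a ℓ‖ := by
        calc ‖a (ℓ+1)‖ * (2 * (ℓ:ℝ) + 2) * (2 * (ℓ:ℝ) + n)
            = ‖a (ℓ+1) * ((2 * (ℓ:ℂ) + 2) * (2 * (ℓ:ℂ) + n))‖ := by
              rw [norm_mul, norm_mul, e1, e2, mul_assoc]
          _ = ‖-lam ^ 2 * a ℓ‖ := by rw [hrec ℓ]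
          _ = ‖lam‖ ^ 2 * ‖a ℓ‖ := by rw [norm_mul, norm_neg, norm_pow]
      have d1 : (0:ℝ) < 2 * (ℓ:ℝ) + 2 := by positivity
      have dn : (1:ℝ) ≤ 2 * (ℓ:ℝ) + n := by
        have : (0:ℝ) ≤ 2 * (ℓ:ℝ) := by positivity
        linarith
      have h2 : ‖a (ℓ+1)‖ * (2 * (ℓ:ℝ) + 2) ≤ ‖lam‖ ^ 2 * ‖a ℓ‖ :=
        le_of_le_of_eq (le_mul_of_one_le_right (by positivity) dn) h
      have h3 : ‖lam‖ ^ 2 * ‖a ℓ‖ ≤ ‖lam‖ ^ 2 * ((‖lam‖ ^ 2 / 2) ^ ℓ / Nat.factorial ℓ) :=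
        mul_le_mul_of_nonneg_left ih (by positivity)
      have h4 : ‖a (ℓ+1)‖ ≤ ‖lam‖ ^ 2 * ((‖lam‖ ^ 2 / 2) ^ ℓ / Nat.factorial ℓ)
          / (2 * (ℓ:ℝ) + 2) := by
        rw [le_div_iff₀ d1]
        exact h2.trans h3
      refine h4.trans (le_of_eq ?_)
      have hf : (Nat.factorial ℓ : ℝ) ≠ 0 := by exact_mod_cast (Nat.factorial_pos ℓ).ne'
      rw [pow_succ]
      push_cast [Nat.factorial_succ]
      field_simp
      ring
  have hbsum : ∀ R : ℝ, Summable (sb a R) := sb_summable a _ habound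
  -- derivatives of φ
  have hφfun : φ = fun y => ∑' ℓ, sg0 a ℓ y := funext h1
  have hD1 : ∀ x : ℝ, HasDerivAt φ (∑' ℓ, sg1 a ℓ x) x := by
    intro x
    rw [hφfun]
    exact stmt4_aux_deriv (sg0 a) (sg1 a) (sb a) (sg0_deriv a) hbsum
      (sb_bound0 a) (sb_bound1 a) x
  have hderivφ : deriv φ = fun x => ∑' ℓ, sg1 a ℓ x := funext fun x => (hD1 x).deriv
  have hD2 : ∀ x : ℝ, HasDerivAt (deriv φ) (∑' ℓ, sg2 a ℓ x) x := by
    intro x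
    rw [hderivφ]
    exact stmt4_aux_deriv (sg1 a) (sg2 a) (sb a) (sg1_deriv a) hbsum
      (sb_bound1 a) (sb_bound2 a) x
  have hderiv2 : ∀ x : ℝ, deriv (deriv φ) x = ∑' ℓ, sg2 a ℓ x := fun x => (hD2 x).deriv
  have hderiv1 : ∀ x : ℝ, deriv φ x = ∑' ℓ, sg1 a ℓ x := fun x => (hD1 x).deriv
  constructor
  · intro r hr
    have hz : ((r:ℝ) : ℂ) ≠ 0 := Complex.ofReal_ne_zero.mpr hr
    have hs0 : Summable (fun ℓ => sg0 a ℓ r) :=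
      Summable.of_norm_bounded (hbsum |r|) (fun ℓ => sb_bound0 a |r| ℓ r le_rfl)
    have hs1 : Summable (fun ℓ => sg1 a ℓ r) :=
      Summable.of_norm_bounded (hbsum |r|) (fun ℓ => sb_bound1 a |r| ℓ r le_rfl)
    have hs2 : Summable (fun ℓ => sg2 a ℓ r) :=
      Summable.of_norm_bounded (hbsum |r|) (fun ℓ => sb_bound2 a |r| ℓ r le_rfl)
    obtain ⟨T, hTdef⟩ : ∃ T : ℕ → ℂ, ∀ ℓ : ℕ, T ℓ =
        a ℓ * (2 * (ℓ:ℂ)) * (2 * (ℓ:ℂ) + n - 2) * (r:ℂ) ^ (2 * ℓ - 1 - 1) :=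
      ⟨_, fun ℓ => rfl⟩
    have hterm : ∀ ℓ : ℕ, sg2 a ℓ r + ((n:ℂ) - 1) / (r:ℂ) * sg1 a ℓ r = T ℓ := by
      intro ℓ
      cases ℓ with
      | zero => rw [sg1, sg2, hTdef]; simp
      | succ ℓ =>
        rw [sg1, sg2, hTdef]
        rw [show 2 * (ℓ+1) - 1 - 1 = 2 * ℓ from by omega,
          show 2 * (ℓ+1) - 1 = 2 * ℓ + 1 from by omega]
        push_cast
        rw [pow_succ]
        field_simp
        ring
    have hTsum : Summable T := by
      have hTe : T = fun ℓ => sg2 a ℓ r + ((n:ℂ) - 1) / (r:ℂ) * sg1 a ℓ r :=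
        funext fun ℓ => (hterm ℓ).symm
      rw [hTe]
      exact hs2.add (hs1.mul_left _)
    have hT0 : T 0 = 0 := by rw [hTdef]; simp
    have hTshift : ∀ ℓ : ℕ, T (ℓ + 1) = -lam ^ 2 * sg0 a ℓ r := by
      intro ℓ
      have e : T (ℓ + 1) = a (ℓ+1) * ((2 * (ℓ:ℂ) + 2) * (2 * (ℓ:ℂ) + n)) * (r:ℂ) ^ (2 * ℓ) := by
        rw [hTdef]
        rw [show 2 * (ℓ+1) - 1 - 1 = 2 * ℓ from by omega]
        push_cast
        ring
      rw [e, hrec ℓ, sg0]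
      ring
    have main : (∑' ℓ, sg2 a ℓ r) + ((n:ℂ) - 1) / (r:ℂ) * (∑' ℓ, sg1 a ℓ r)
        = -lam ^ 2 * (∑' ℓ, sg0 a ℓ r) := by
      rw [← tsum_mul_left (a := ((n:ℂ) - 1) / (r:ℂ)), ← Summable.tsum_add hs2 (hs1.mul_left _),
        tsum_congr hterm, Summable.tsum_eq_zero_add hTsum, hT0, zero_add, tsum_congr hTshift,
        tsum_mul_left]
    rw [hderiv2 r, hderiv1 r, h1 r]
    linear_combination main
  · rw [h1 0]
    rw [tsum_eq_single 0 ?_]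
    · rw [sg0, hadef 0, hc0]
      simp
    · intro ℓ hℓ
      rw [sg0]
      simp only [Complex.ofReal_zero]
      rw [zero_pow (by omega : 2 * ℓ ≠ 0)]
      ring
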